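/- Let K ⊆ ℝⁿ × ℝᵐ and F ⊆ ℝᵐ be compact, let f, G be continuous on ℝⁿ × ℝᵐ, and let J(x) = min_{w ∈ F} G(x,w) (assume F ≠ ∅ so J is well-defined and continuous). For ε ≥ 0, let S_ε = {(x,y) ∈ K : y ∈ F, G(x,y) - J(x) ≤ ε} and val(ε) = inf{f(x,y) : (x,y) ∈ S_ε}, assuming S₀ ≠ ∅. Let ε_k → 0⁺, δ_k → 0⁺, and let (x_k, y_k) ∈ S_{ε_k} with f(x_k, y_k) ≤ val(ε_k) + δ_k. Then (x_k, y_k) is bounded and every cluster point (x̄, ȳ) satisfies (x̄, ȳ) ∈ S₀ and f(x̄, ȳ) = val(0); i.e., (x̄, ȳ) is a global minimizer of the problem with ε = 0. -/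

import Mathlib

open Set Filter

theorem stmt14 {n m : ℕ}
    (K : Set (EuclideanSpace ℝ (Fin n) × EuclideanSpace ℝ (Fin m)))
    (F : Set (EuclideanSpace ℝ (Fin m)))
    (hK : IsCompact K) (hF : IsCompact F) (hFne : F.Nonempty)
    (f G : EuclideanSpace ℝ (Fin n) × EuclideanSpace ℝ (Fin m) → ℝ)
    (hf : Continuous f) (hG : Continuous G)
    (J : EuclideanSpace ℝ (Fin n) → ℝ)
    (hJ : ∀ x, IsLeast ((fun w => G (x, w)) '' F) (J x))
    (S : ℝ → Set (EuclideanSpace ℝ (Fin n) × EuclideanSpace ℝ (Fin m)))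
    (hS : ∀ ε, S ε = {p ∈ K | p.2 ∈ F ∧ G p - J p.1 ≤ ε})
    (val : ℝ → ℝ) (hval : ∀ ε, val ε = sInf (f '' S ε))
    (hS0 : (S 0).Nonempty)
    (ε δ : ℕ → ℝ)
    (hεpos : ∀ k, 0 < ε k) (hδpos : ∀ k, 0 < δ k)
    (hε : Tendsto ε atTop (nhds 0)) (hδ : Tendsto δ atTop (nhds 0))
    (z : ℕ → EuclideanSpace ℝ (Fin n) × EuclideanSpace ℝ (Fin m))
    (hzfeas : ∀ k, z k ∈ S (ε k))
    (hzval : ∀ k, f (z k) ≤ val (ε k) + δ k) :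
    Bornology.IsBounded (range z) ∧
    ∀ p : EuclideanSpace ℝ (Fin n) × EuclideanSpace ℝ (Fin m),
      MapClusterPt p atTop z → p ∈ S 0 ∧ f p = val 0 := by
  -- membership facts
  have hzK : ∀ k, z k ∈ K := fun k => by
    have := hzfeas k; rw [hS] at this; exact this.1
  have hzF : ∀ k, (z k).2 ∈ F := fun k => by
    have := hzfeas k; rw [hS] at this; exact this.2.1
  have hSsubK : ∀ e, S e ⊆ K := fun e => by rw [hS]; exact fun p hp => hp.1
  -- f '' K is bounded below
  have hbddK : BddBelow (f '' K) := ((hK.image hf).isBounded).bddBelow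
  have hbdd : ∀ e, BddBelow (f '' S e) := fun e =>
    hbddK.mono (image_mono (f := f) (hSsubK e))
  have hS0sub : ∀ k, S 0 ⊆ S (ε k) := fun k => by
    rw [hS, hS]
    exact fun p hp => ⟨hp.1, hp.2.1, hp.2.2.trans (hεpos k).le⟩
  have hvalle : ∀ k, val (ε k) ≤ val 0 := fun k => by
    rw [hval, hval]
    exact csInf_le_csInf (hbdd (ε k)) (hS0.image f) (image_mono (f := f) (hS0sub k))
  have hzval0 : ∀ k, f (z k) ≤ val 0 + δ k := fun k =>
    (hzval k).trans (by linarith [hvalle k])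
  constructor
  · exact hK.isBounded.subset (range_subset_iff.2 hzK)
  · intro p hp
    obtain ⟨ψ, hψ, hψt⟩ := TopologicalSpace.FirstCountableTopology.tendsto_subseq hp
    have hψtop : Tendsto ψ atTop atTop := hψ.tendsto_atTop
    -- p ∈ K
    have hpK : p ∈ K := hK.isClosed.mem_of_tendsto hψt
      (Eventually.of_forall fun k => hzK (ψ k))
    have hp2F : p.2 ∈ F := hF.isClosed.mem_of_tendsto
      ((continuous_snd.tendsto p).comp hψt)
      (Eventually.of_forall fun k => hzF (ψ k))
    -- G p ≤ J p.1
    have hGp : G p - J p.1 ≤ 0 := by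
      obtain ⟨w, hwF, hw⟩ := (hJ p.1).1
      have hkey : ∀ k, G (z (ψ k)) ≤ G ((z (ψ k)).1, w) + ε (ψ k) := fun k => by
        have h1 : G (z (ψ k)) - J (z (ψ k)).1 ≤ ε (ψ k) := by
          have := hzfeas (ψ k); rw [hS] at this; exact this.2.2
        have h2 : J (z (ψ k)).1 ≤ G ((z (ψ k)).1, w) :=
          (hJ (z (ψ k)).1).2 ⟨w, hwF, rfl⟩
        linarith
      have hG1 : Tendsto (fun k => G (z (ψ k))) atTop (nhds (G p)) :=
        (hG.tendsto p).comp hψt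
      have hG2 : Tendsto (fun k => G ((z (ψ k)).1, w) + ε (ψ k)) atTop
          (nhds (G (p.1, w) + 0)) := by
        refine Tendsto.add ?_ (hε.comp hψtop)
        exact (hG.tendsto (p.1, w)).comp
          (((continuous_fst.tendsto p).comp hψt).prodMk_nhds tendsto_const_nhds)
      have := le_of_tendsto_of_tendsto' hG1 hG2 hkey
      rw [add_zero] at this
      simp only [] at hw; linarith [hw, this]
    have hpS0 : p ∈ S 0 := by rw [hS]; exact ⟨hpK, hp2F, hGp⟩
    refine ⟨hpS0, le_antisymm ?_ ?_⟩
    · -- f p ≤ val 0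
      have hf1 : Tendsto (fun k => f (z (ψ k))) atTop (nhds (f p)) :=
        (hf.tendsto p).comp hψt
      have hf2 : Tendsto (fun k => val 0 + δ (ψ k)) atTop (nhds (val 0 + 0)) :=
        Tendsto.add tendsto_const_nhds (hδ.comp hψtop)
      have := le_of_tendsto_of_tendsto' hf1 hf2 fun k => hzval0 (ψ k)
      rwa [add_zero] at this
    · rw [hval]
      exact csInf_le (hbdd 0) ⟨p, hpS0, rfl⟩
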